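/- Let A ⊆ ℝ^d be a proper linear subspace, let P ⊆ A and Q ⊆ A^⊥ be nonempty finite sets, let x be the minimum norm point of the affine hull of P, let y be the minimum norm point of the affine hull of Q, and let z be the minimum norm point of the affine hull of P ∪ Q. Then z is the point of minimum Euclidean norm in the segment [x, y] = {t·x + (1 − t)·y : t ∈ [0,1]}, and if x ≠ 0 or y ≠ 0, then z = λ·x + (1 − λ)·y with λ = ‖y‖² / (‖x‖² + ‖y‖²). -/
import Mathlib


open InnerProductSpace RealInnerProductSpace

private lemma aux_min_orth {E : Type*} [NormedAddCommGroup E] [InnerProductSpace ℝ E]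
    (S : AffineSubspace ℝ E) (x : E) (hx : x ∈ S)
    (hmin : ∀ w ∈ S, ‖x‖ ≤ ‖w‖) : ∀ v ∈ S.direction, ⟪x, v⟫ = 0 := by
  intro v hv
  by_cases hv0 : v = 0
  · simp [hv0]
  have hvp : (0:ℝ) < ‖v‖ := norm_pos_iff.mpr hv0
  have hvv : (0:ℝ) < ‖v‖^2 := by positivity
  have hforall : ∀ t : ℝ, 0 ≤ t^2 * ‖v‖^2 + 2 * (t * ⟪x, v⟫) := by
    intro t
    have hmem : (t • v) +ᵥ x ∈ S :=
      AffineSubspace.vadd_mem_of_mem_direction (S.direction.smul_mem t hv) hx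
    have h1 : ‖x‖ ≤ ‖t • v + x‖ := hmin _ hmem
    have h2 : ‖x‖^2 ≤ ‖t • v + x‖^2 := by
      have := norm_nonneg x
      nlinarith [norm_nonneg (t • v + x)]
    have h3 : ‖t • v + x‖^2 = t^2 * ‖v‖^2 + 2 * (t * ⟪x, v⟫) + ‖x‖^2 := by
      rw [norm_add_sq_real, norm_smul, real_inner_smul_left, real_inner_comm v x,
        Real.norm_eq_abs, mul_pow, sq_abs]
    linarith [h3 ▸ h2]
  have h4 := hforall (-⟪x, v⟫ / ‖v‖^2)
  have hne : ‖v‖^2 ≠ 0 := ne_of_gt hvv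
  have h5 : (-⟪x, v⟫ / ‖v‖^2)^2 * ‖v‖^2 + 2 * ((-⟪x, v⟫ / ‖v‖^2) * ⟪x, v⟫) =
      -(⟪x, v⟫^2 / ‖v‖^2) := by
    field_simp
    ring
  rw [h5] at h4
  have h6 : ⟪x, v⟫^2 / ‖v‖^2 ≤ 0 := by linarith
  have h7 : ⟪x, v⟫^2 ≤ 0 := by
    by_contra hc
    push_neg at hc
    exact absurd h6 (not_le.mpr (div_pos hc hvv))
  have h8 : ⟪x, v⟫^2 = 0 := le_antisymm h7 (sq_nonneg _)
  exact pow_eq_zero_iff two_ne_zero |>.mp h8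

theorem stmt_3 (d : ℕ) (A : Submodule ℝ (EuclideanSpace ℝ (Fin d))) (hA : A ≠ ⊤)
    (P Q : Set (EuclideanSpace ℝ (Fin d)))
    (hPfin : P.Finite) (hPne : P.Nonempty) (hPA : P ⊆ (A : Set (EuclideanSpace ℝ (Fin d))))
    (hQfin : Q.Finite) (hQne : Q.Nonempty) (hQA : Q ⊆ (Aᗮ : Set (EuclideanSpace ℝ (Fin d))))
    (x y z : EuclideanSpace ℝ (Fin d))
    (hxmem : x ∈ affineSpan ℝ P) (hxmin : ∀ w ∈ affineSpan ℝ P, ‖x‖ ≤ ‖w‖)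
    (hymem : y ∈ affineSpan ℝ Q) (hymin : ∀ w ∈ affineSpan ℝ Q, ‖y‖ ≤ ‖w‖)
    (hzmem : z ∈ affineSpan ℝ (P ∪ Q)) (hzmin : ∀ w ∈ affineSpan ℝ (P ∪ Q), ‖z‖ ≤ ‖w‖) :
    (z ∈ segment ℝ x y ∧ ∀ w ∈ segment ℝ x y, ‖z‖ ≤ ‖w‖) ∧
      ((x ≠ 0 ∨ y ≠ 0) →
        z = (‖y‖ ^ 2 / (‖x‖ ^ 2 + ‖y‖ ^ 2)) • x +
            (1 - ‖y‖ ^ 2 / (‖x‖ ^ 2 + ‖y‖ ^ 2)) • y) := by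
  classical
  set a : ℝ := ‖x‖ ^ 2 with ha_def
  set b : ℝ := ‖y‖ ^ 2 with hb_def
  set lam : ℝ := b / (a + b) with hlam_def
  have ha : 0 ≤ a := by positivity
  have hb : 0 ≤ b := by positivity
  -- spans inside A, Aᗮ
  have hPspan : affineSpan ℝ P ≤ A.toAffineSubspace := by
    rw [affineSpan_le]; exact hPA
  have hQspan : affineSpan ℝ Q ≤ Aᗮ.toAffineSubspace := by
    rw [affineSpan_le]; exact hQA
  have hmemA : ∀ u ∈ affineSpan ℝ P, u ∈ A := fun u hu =>
    Submodule.mem_toAffineSubspace.mp (hPspan hu)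
  have hmemAo : ∀ u ∈ affineSpan ℝ Q, u ∈ Aᗮ := fun u hu =>
    Submodule.mem_toAffineSubspace.mp (hQspan hu)
  have hxA : x ∈ A := hmemA x hxmem
  have hyA : y ∈ Aᗮ := hmemAo y hymem
  -- inner product computations
  have hinner_xu : ∀ u ∈ affineSpan ℝ P, ⟪x, u⟫ = a := by
    intro u hu
    have hd : u -ᵥ x ∈ (affineSpan ℝ P).direction :=
      AffineSubspace.vsub_mem_direction hu hxmem
    have h0 := aux_min_orth _ x hxmem hxmin _ hd
    have hxx : ⟪x, x⟫ = a := real_inner_self_eq_norm_sq x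
    rw [vsub_eq_sub, inner_sub_right, sub_eq_zero, hxx] at h0
    exact h0
  have hinner_yv : ∀ v ∈ affineSpan ℝ Q, ⟪y, v⟫ = b := by
    intro v hv
    have hd : v -ᵥ y ∈ (affineSpan ℝ Q).direction :=
      AffineSubspace.vsub_mem_direction hv hymem
    have h0 := aux_min_orth _ y hymem hymin _ hd
    have hyy : ⟪y, y⟫ = b := real_inner_self_eq_norm_sq y
    rw [vsub_eq_sub, inner_sub_right, sub_eq_zero, hyy] at h0
    exact h0
  have hinner_xv : ∀ v ∈ affineSpan ℝ Q, ⟪x, v⟫ = 0 := fun v hv =>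
    Submodule.inner_right_of_mem_orthogonal hxA (hmemAo v hv)
  have hinner_yu : ∀ u ∈ affineSpan ℝ P, ⟪y, u⟫ = 0 := fun u hu => by
    rw [real_inner_comm]
    exact Submodule.inner_right_of_mem_orthogonal (hmemA u hu) hyA
  -- key scalar identity
  have hkey : lam * a = (1 - lam) * b := by
    by_cases hab : a + b = 0
    · have ha0 : a = 0 := by linarith
      have hb0 : b = 0 := by linarith
      simp [hlam_def, ha0, hb0]
    · rw [hlam_def]; field_simp; ring
  set zs : EuclideanSpace ℝ (Fin d) := lam • x + (1 - lam) • y with hzs_def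
  -- inner of zs with points of P ∪ Q
  have hinner_zs : ∀ u ∈ P ∪ Q, ⟪zs, u⟫ = lam * a := by
    rintro u (hp | hq)
    · have h1 := hinner_xu u (subset_affineSpan ℝ P hp)
      have h2 := hinner_yu u (subset_affineSpan ℝ P hp)
      rw [hzs_def, inner_add_left, real_inner_smul_left, real_inner_smul_left, h1, h2]
      ring
    · have h1 := hinner_xv u (subset_affineSpan ℝ Q hq)
      have h2 := hinner_yv u (subset_affineSpan ℝ Q hq)
      rw [hzs_def, inner_add_left, real_inner_smul_left, real_inner_smul_left, h1, h2, ← hkey]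
      ring
  -- zs orthogonal to vectorSpan (P ∪ Q)
  have horth : ∀ v ∈ vectorSpan ℝ (P ∪ Q), ⟪zs, v⟫ = 0 := by
    intro v hv
    rw [vectorSpan_def] at hv
    induction hv using Submodule.span_induction with
    | mem g hg =>
      obtain ⟨u, hu, w, hw, rfl⟩ := hg
      have huw : ⟪zs, u - w⟫ = 0 := by
        rw [inner_sub_right, hinner_zs u hu, hinner_zs w hw, sub_self]
      simpa [vsub_eq_sub] using huw
    | zero => simp
    | add u w _ _ h1 h2 => rw [inner_add_right, h1, h2, add_zero]
    | smul c u _ h => rw [real_inner_smul_right, h, mul_zero]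
  -- segment points are in the affine span
  have hsegmem : ∀ t : ℝ, t • x + (1 - t) • y ∈ affineSpan ℝ (P ∪ Q) := by
    intro t
    have hx' : x ∈ affineSpan ℝ (P ∪ Q) :=
      affineSpan_mono ℝ Set.subset_union_left hxmem
    have hy' : y ∈ affineSpan ℝ (P ∪ Q) :=
      affineSpan_mono ℝ Set.subset_union_right hymem
    have h := AffineSubspace.smul_vsub_vadd_mem _ t hx' hy' hy'
    have heq : t • (x -ᵥ y) +ᵥ y = t • x + (1 - t) • y := by
      rw [vsub_eq_sub, vadd_eq_add]
      module
    rwa [heq] at h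
  have hzsmem : zs ∈ affineSpan ℝ (P ∪ Q) := hsegmem lam
  -- zs is a minimum norm point
  have hzsmin : ∀ w ∈ affineSpan ℝ (P ∪ Q), ‖zs‖ ≤ ‖w‖ := by
    intro w hw
    have hd : w -ᵥ zs ∈ (affineSpan ℝ (P ∪ Q)).direction :=
      AffineSubspace.vsub_mem_direction hw hzsmem
    rw [direction_affineSpan] at hd
    have h0 := horth _ hd
    rw [vsub_eq_sub] at h0
    have hdecomp : w = zs + (w - zs) := by abel
    have hsq : ‖w‖^2 = ‖zs‖^2 + ‖w - zs‖^2 := by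
      conv_lhs => rw [hdecomp]
      rw [norm_add_sq_real, h0]
      ring
    nlinarith [norm_nonneg w, norm_nonneg zs, sq_nonneg ‖w - zs‖]
  -- z = zs by uniqueness
  have hz_eq : z = zs := by
    have h1 : ‖z‖ ≤ ‖zs‖ := hzmin _ hzsmem
    have h2 : ‖zs‖ ≤ ‖z‖ := hzsmin _ hzmem
    have heq : ‖z‖ = ‖zs‖ := le_antisymm h1 h2
    by_contra hne
    have hmid : (1/2 : ℝ) • (z + zs) ∈ affineSpan ℝ (P ∪ Q) := by
      have h := AffineSubspace.smul_vsub_vadd_mem _ (1/2 : ℝ) hzmem hzsmem hzsmem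
      have heq2 : (1/2 : ℝ) • (z -ᵥ zs) +ᵥ zs = (1/2 : ℝ) • (z + zs) := by
        rw [vsub_eq_sub, vadd_eq_add]
        module
      rwa [heq2] at h
    have hlt : ‖(1/2 : ℝ) • (z + zs)‖ < ‖z‖ := (norm_midpoint_lt_iff heq).mpr hne
    exact absurd (hzmin _ hmid) (not_le.mpr hlt)
  -- lam bounds
  have hlam0 : 0 ≤ lam := by
    by_cases hab : a + b = 0
    · simp [hlam_def, hab]
    · exact div_nonneg hb (by positivity)
  have hlam1 : lam ≤ 1 := by
    by_cases hab : a + b = 0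
    · simp [hlam_def, hab]
    · rw [hlam_def, div_le_one (lt_of_le_of_ne (by positivity) (Ne.symm hab))]
      linarith
  refine ⟨⟨?_, ?_⟩, ?_⟩
  · rw [hz_eq, hzs_def]
    exact ⟨lam, 1 - lam, hlam0, by linarith, by ring, rfl⟩
  · rintro w ⟨t, s, ht, hs, hts, rfl⟩
    have hs' : s = 1 - t := by linarith
    rw [hs']
    exact hzmin _ (hsegmem t)
  · intro _
    exact hz_eq
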